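/- Let f: H × X → [0,1] be measurable, δ > 0 and n ≥ 8. Assume the exponential moment bound E_x[e^{n κ((1/n)Σᵢ f(h,xᵢ), E_x f(h,x))}] ≤ 2√n for every h. Then with probability at least 1-δ in x ∼ μⁿ and h ∼ G_β(x): κ((1/n)Σᵢ f(h,xᵢ), E_x[f(h,x)]) ≤ (1/n)(Γ(h,x,β⃗) + ln(2√n/δ)). -/

import Mathlib

open MeasureTheory

/-- Empirical loss `L̂(h,x) = (1/n) Σ_i ℓ(h,x_i)`. -/
noncomputable def empLoss {H X : Type*} (n : ℕ) (ℓ : H → X → ℝ) (h : H) (x : Fin n → X) : ℝ :=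
  (∑ i, ℓ h (x i)) / n

/-- Partition function `Z_β(x) = ∫ exp(-β L̂(h,x)) dπ(h)`. -/
noncomputable def partZ {H X : Type*} [MeasurableSpace H] (pri : Measure H) (n : ℕ)
    (ℓ : H → X → ℝ) (β : ℝ) (x : Fin n → X) : ℝ :=
  ∫ h, Real.exp (-β * empLoss n ℓ h x) ∂pri

/-- Gibbs posterior `G_β(x)` with density `exp(-β L̂(h,x))/Z_β(x)` w.r.t. the prior. -/
noncomputable def gibbsP {H X : Type*} [MeasurableSpace H] (pri : Measure H) (n : ℕ)
    (ℓ : H → X → ℝ) (β : ℝ) (x : Fin n → X) : Measure H :=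
  pri.withDensity fun h =>
    ENNReal.ofReal (Real.exp (-β * empLoss n ℓ h x) / partZ pri n ℓ β x)

/-- The bounding functional
`Γ(h,x,β⃗) = -β_K L̂(h,x) + Σ_{k=1}^K (β_k-β_{k-1}) E_{g∼G_{β_{k-1}}(x)}[L̂(g,x)]`. -/
noncomputable def Gam {H X : Type*} [MeasurableSpace H] (pri : Measure H) (n : ℕ)
    (ℓ : H → X → ℝ) {K : ℕ} (βs : Fin (K + 1) → ℝ) (h : H) (x : Fin n → X) : ℝ :=
  -βs (Fin.last K) * empLoss n ℓ h x
    + ∑ k : Fin K, (βs k.succ - βs k.castSucc)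
        * ∫ g, empLoss n ℓ g x ∂(gibbsP pri n ℓ (βs k.castSucc) x)

/-- Binary relative entropy `κ(p,q) = p ln(p/q) + (1-p) ln((1-p)/(1-q))`. -/
noncomputable def kappa (p q : ℝ) : ℝ :=
  p * Real.log (p / q) + (1 - p) * Real.log ((1 - p) / (1 - q))

open scoped ENNReal NNReal

namespace KLAux

noncomputable def Zf {H : Type*} [MeasurableSpace H] (pri : Measure H) (L : H → ℝ) (t : ℝ) : ℝ :=
  ∫ h, Real.exp (-t * L h) ∂pri

noncomputable def Gf {H : Type*} [MeasurableSpace H] (pri : Measure H) (L : H → ℝ) (t : ℝ) :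
    Measure H :=
  pri.withDensity fun h => ENNReal.ofReal (Real.exp (-t * L h) / Zf pri L t)

variable {H : Type*} [MeasurableSpace H] {pri : Measure H} [IsProbabilityMeasure pri]
  {L : H → ℝ} {m : ℝ}

lemma expInt (hLm : Measurable L) (hL0 : ∀ h, 0 ≤ L h) {t : ℝ} (ht : 0 ≤ t) :
    Integrable (fun h => Real.exp (-t * L h)) pri := by
  refine (integrable_const (1:ℝ)).mono' ((hLm.const_mul (-t)).exp.aestronglyMeasurable) ?_
  filter_upwards with h
  rw [Real.norm_eq_abs, abs_of_pos (Real.exp_pos _)]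
  exact Real.exp_le_one_iff.2 (by nlinarith [hL0 h])

lemma Zf_pos (hLm : Measurable L) (hL0 : ∀ h, 0 ≤ L h) (hLb : ∀ h, L h ≤ m) {t : ℝ}
    (ht : 0 ≤ t) : 0 < Zf pri L t := by
  have hmono : ∀ h, Real.exp (-t * m) ≤ Real.exp (-t * L h) := fun h =>
    Real.exp_le_exp.2 (by nlinarith [hLb h])
  calc (0:ℝ) < Real.exp (-t * m) := Real.exp_pos _
    _ = ∫ _, Real.exp (-t * m) ∂pri := by simp
    _ ≤ Zf pri L t := integral_mono (integrable_const _) (expInt hLm hL0 ht) hmono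

lemma Gf_integral (hLm : Measurable L) {t : ℝ} (hZ : 0 ≤ Zf pri L t) (g : H → ℝ) :
    ∫ h, g h ∂(Gf pri L t)
      = ∫ h, (Real.exp (-t * L h) / Zf pri L t) * g h ∂pri := by
  have hm : Measurable fun h => (Real.exp (-t * L h) / Zf pri L t).toNNReal :=
    ((hLm.const_mul (-t)).exp.div_const _).real_toNNReal
  rw [Gf]
  rw [show (fun h => ENNReal.ofReal (Real.exp (-t * L h) / Zf pri L t))
      = fun h => ((Real.exp (-t * L h) / Zf pri L t).toNNReal : ℝ≥0∞) from rfl]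
  rw [integral_withDensity_eq_integral_smul hm g]
  refine integral_congr_ae (Filter.Eventually.of_forall fun h => ?_)
  have hp : 0 ≤ Real.exp (-t * L h) / Zf pri L t := div_nonneg (Real.exp_pos _).le hZ
  simp only [NNReal.smul_def, Real.coe_toNNReal _ hp, smul_eq_mul]


lemma Gf_prob (hLm : Measurable L) (hL0 : ∀ h, 0 ≤ L h) (hLb : ∀ h, L h ≤ m) {t : ℝ}
    (ht : 0 ≤ t) : IsProbabilityMeasure (Gf pri L t) := by
  have hZ := Zf_pos hLm hL0 hLb ht (pri := pri)
  constructor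
  rw [Gf, withDensity_apply _ MeasurableSet.univ, setLIntegral_univ,
    ← ofReal_integral_eq_lintegral_ofReal ((expInt hLm hL0 ht).div_const _)
      (Filter.Eventually.of_forall fun h => div_nonneg (Real.exp_pos _).le hZ.le)]
  rw [integral_div, Zf] at *
  rw [div_self hZ.ne', ENNReal.ofReal_one]

lemma Gf_integrable (hLm : Measurable L) (hL0 : ∀ h, 0 ≤ L h) (hLb : ∀ h, L h ≤ m) {t : ℝ}
    (ht : 0 ≤ t) {g : H → ℝ} (hg : Measurable g) {C : ℝ} (hC : ∀ h, ‖g h‖ ≤ C) :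
    Integrable g (Gf pri L t) := by
  have := Gf_prob hLm hL0 hLb ht (pri := pri)
  exact (integrable_const C).mono' hg.aestronglyMeasurable
    (Filter.Eventually.of_forall hC)

lemma log_step (hLm : Measurable L) (hL0 : ∀ h, 0 ≤ L h) (hLb : ∀ h, L h ≤ m) {s t : ℝ}
    (hs : 0 ≤ s) (hst : s ≤ t) :
    Real.log (Zf pri L s) - Real.log (Zf pri L t)
      ≤ (t - s) * ∫ h, L h ∂(Gf pri L s) := by
  have ht : 0 ≤ t := hs.trans hst
  have hZs := Zf_pos hLm hL0 hLb hs (pri := pri)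
  have hZt := Zf_pos hLm hL0 hLb ht (pri := pri)
  have hprob := Gf_prob hLm hL0 hLb hs (pri := pri)
  have hLint : Integrable L (Gf pri L s) :=
    Gf_integrable hLm hL0 hLb hs hLm (C := m)
      (fun h => by rw [Real.norm_eq_abs, abs_of_nonneg (hL0 h)]; exact hLb h)
  have hEint : Integrable (fun h => Real.exp (-(t - s) * L h)) (Gf pri L s) :=
    Gf_integrable hLm hL0 hLb hs ((hLm.const_mul _).exp) (C := 1)
      (fun h => by
        rw [Real.norm_eq_abs, abs_of_pos (Real.exp_pos _)]
        exact Real.exp_le_one_iff.2 (by nlinarith [hL0 h]))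
  have hjen : Real.exp (∫ h, -(t - s) * L h ∂(Gf pri L s))
      ≤ ∫ h, Real.exp (-(t - s) * L h) ∂(Gf pri L s) := by
    have := convexOn_exp.map_integral_le (μ := Gf pri L s)
      (f := fun h => -(t - s) * L h) Real.continuous_exp.continuousOn isClosed_univ
      (Filter.Eventually.of_forall fun h => trivial) (hLint.const_mul _) ?_
    · exact this
    · exact hEint
  have h1 : ∫ h, -(t - s) * L h ∂(Gf pri L s) = -(t - s) * ∫ h, L h ∂(Gf pri L s) :=
    integral_const_mul _ _
  have h2 : ∫ h, Real.exp (-(t - s) * L h) ∂(Gf pri L s) = Zf pri L t / Zf pri L s := by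
    rw [Gf_integral hLm hZs.le]
    have : ∀ h, Real.exp (-s * L h) / Zf pri L s * Real.exp (-(t - s) * L h)
        = Real.exp (-t * L h) / Zf pri L s := by
      intro h
      rw [div_mul_eq_mul_div, ← Real.exp_add]
      ring_nf
    rw [integral_congr_ae (Filter.Eventually.of_forall this), integral_div]
    rfl
  rw [h1, h2] at hjen
  have hlog := Real.log_le_log (Real.exp_pos _) hjen
  rw [Real.log_exp, Real.log_div hZt.ne' hZs.ne'] at hlog
  nlinarith [hlog]

lemma fin_telescope {K : ℕ} (g : Fin (K + 1) → ℝ) :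
    ∑ k : Fin K, (g k.succ - g k.castSucc) = g (Fin.last K) - g 0 := by
  induction K with
  | zero => simp
  | succ K ih =>
    rw [Fin.sum_univ_castSucc]
    have h2 := ih (fun i => g i.castSucc)
    simp only [Fin.succ_castSucc, Fin.castSucc_zero] at h2
    simp only [Fin.succ_castSucc]
    rw [h2, Fin.succ_last]
    ring

lemma kappa_term_le (p q : ℝ) (hp0 : 0 ≤ p) (hp1 : p ≤ 1) :
    p * Real.log (p / q) ≤ |Real.log q| := by
  rcases eq_or_ne q 0 with hq | hq
  · simp [hq]
  rcases eq_or_ne p 0 with hp | hp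
  · simp [hp]
  rw [Real.log_div hp hq]
  have h1 : Real.log p ≤ 0 := Real.log_nonpos hp0 hp1
  have h2 : -Real.log q ≤ |Real.log q| := neg_le_abs _
  have h3 : 0 ≤ |Real.log q| := abs_nonneg _
  nlinarith

end KLAux

open KLAux

/-- for `f : H × X → [0,1]`, `n ≥ 8`, with probability at least `1-δ` in
`x ∼ μⁿ` and `h ∼ G_β(x)`:
`κ((1/n)Σᵢ f(h,xᵢ), E_x[f(h,x)]) ≤ (1/n)(Γ(h,x,β⃗) + ln(2√n/δ))`. -/
theorem kl_bound_single_draw {H X : Type*} [MeasurableSpace H] [MeasurableSpace X]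
    (μ : Measure X) [IsProbabilityMeasure μ]
    (pri : Measure H) [IsProbabilityMeasure pri]
    (n : ℕ) (hn : 8 ≤ n)
    (ℓ : H → X → ℝ) (hℓmeas : Measurable fun p : H × X => ℓ p.1 p.2)
    (m : ℝ) (hℓnonneg : ∀ h x, 0 ≤ ℓ h x) (hℓbound : ∀ h x, ℓ h x ≤ m)
    (K : ℕ) (hK : 0 < K) (βs : Fin (K + 1) → ℝ)
    (hmono : StrictMono βs) (h0 : βs 0 = 0)
    (β : ℝ) (hβ : βs (Fin.last K) = β) (hβpos : 0 < β)
    (f : H → X → ℝ) (hfmeas : Measurable fun p : H × X => f p.1 p.2)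
    (hf0 : ∀ h x, 0 ≤ f h x) (hf1 : ∀ h x, f h x ≤ 1)
    (hexp : ∀ h, ∫ x, Real.exp ((n : ℝ) * kappa (empLoss n f h x) (∫ y, f h y ∂μ))
        ∂(Measure.pi fun _ : Fin n => μ) ≤ 2 * Real.sqrt n)
    (δ : ℝ) (hδ : 0 < δ) :
    ∫⁻ x, (gibbsP pri n ℓ β x)
        {h | (1 / (n : ℝ)) * (Gam pri n ℓ βs h x + Real.log (2 * Real.sqrt n / δ))
              < kappa (empLoss n f h x) (∫ y, f h y ∂μ)}
      ∂(Measure.pi fun _ : Fin n => μ) ≤ ENNReal.ofReal δ := by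
  classical
  set ν := Measure.pi fun _ : Fin n => μ with hν
  have hn0 : (0:ℝ) < n := by
    have : 0 < n := lt_of_lt_of_le (by norm_num) hn
    exact_mod_cast this
  have hsq : (0:ℝ) < Real.sqrt n := Real.sqrt_pos.2 hn0
  have hsd : (0:ℝ) < 2 * Real.sqrt n / δ := by positivity
  set c := Real.log (2 * Real.sqrt n / δ) with hc
  set d := δ / (2 * Real.sqrt n) with hd
  have hd0 : 0 < d := by positivity
  have hexc : Real.exp (-c) = d := by
    rw [hc, Real.exp_neg, Real.exp_log hsd, hd]
    field_simp
  -- measurability facts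
  have hqmeas : Measurable fun h : H => ∫ y, f h y ∂μ :=
    (hfmeas.stronglyMeasurable.integral_prod_right').measurable
  have hEmpf : Measurable fun p : H × (Fin n → X) => empLoss n f p.1 p.2 := by
    apply Measurable.div_const
    exact Finset.measurable_sum _ fun i _ =>
      hfmeas.comp (measurable_fst.prodMk ((measurable_pi_apply i).comp measurable_snd))
  have hEmpl : Measurable fun p : H × (Fin n → X) => empLoss n ℓ p.1 p.2 := by
    apply Measurable.div_const
    exact Finset.measurable_sum _ fun i _ =>
      hℓmeas.comp (measurable_fst.prodMk ((measurable_pi_apply i).comp measurable_snd))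
  have hκmeas : Measurable fun p : H × (Fin n → X) =>
      kappa (empLoss n f p.1 p.2) (∫ y, f p.1 y ∂μ) := by
    unfold kappa
    refine Measurable.add ?_ ?_
    · exact hEmpf.mul ((hEmpf.div (hqmeas.comp measurable_fst)).log)
    · exact (measurable_const.sub hEmpf).mul
        (((measurable_const.sub hEmpf).div
          (measurable_const.sub (hqmeas.comp measurable_fst))).log)
  have hemp0 : ∀ (h : H) (x : Fin n → X), 0 ≤ empLoss n f h x := fun h x =>
    div_nonneg (Finset.sum_nonneg fun i _ => hf0 _ _) hn0.le
  have hemp1 : ∀ (h : H) (x : Fin n → X), empLoss n f h x ≤ 1 := by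
    intro h x
    rw [empLoss, div_le_one hn0]
    calc ∑ i, f h (x i) ≤ ∑ _i : Fin n, (1:ℝ) := Finset.sum_le_sum fun i _ => hf1 _ _
      _ = n := by simp
  -- pointwise-in-x bound
  have main1 : ∀ x : Fin n → X,
      (gibbsP pri n ℓ β x)
        {h | (1 / (n : ℝ)) * (Gam pri n ℓ βs h x + c)
              < kappa (empLoss n f h x) (∫ y, f h y ∂μ)}
      ≤ ∫⁻ h, ENNReal.ofReal
          (Real.exp ((n : ℝ) * kappa (empLoss n f h x) (∫ y, f h y ∂μ)) * d) ∂pri := by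
    intro x
    set L : H → ℝ := fun h => empLoss n ℓ h x with hL
    have hLm : Measurable L := hEmpl.comp (measurable_id.prodMk measurable_const)
    have hL0 : ∀ h, 0 ≤ L h := fun h =>
      div_nonneg (Finset.sum_nonneg fun i _ => hℓnonneg _ _) hn0.le
    have hLb : ∀ h, L h ≤ m := by
      intro h
      show (∑ i, ℓ h (x i)) / (n : ℝ) ≤ m
      rw [div_le_iff₀ hn0]
      calc ∑ i, ℓ h (x i) ≤ ∑ _i : Fin n, m := Finset.sum_le_sum fun i _ => hℓbound _ _
        _ = m * n := by simp [mul_comm]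
    have hβnn : ∀ k : Fin (K + 1), 0 ≤ βs k := fun k => by
      rw [← h0]; exact hmono.monotone (Fin.zero_le k)
    have hGeq : ∀ t, gibbsP pri n ℓ t x = Gf pri L t := fun t => rfl
    have hZβ : 0 < Zf pri L β := Zf_pos hLm hL0 hLb hβpos.le
    have hint_eq : ∀ t : ℝ,
        (∫ g, empLoss n ℓ g x ∂(gibbsP pri n ℓ t x)) = ∫ h, L h ∂(Gf pri L t) :=
      fun t => rfl
    have hZ0 : Zf pri L (βs 0) = 1 := by
      rw [h0]; simp [Zf]
    have hsum : -Real.log (Zf pri L β)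
        ≤ ∑ k : Fin K, (βs k.succ - βs k.castSucc)
            * ∫ g, empLoss n ℓ g x ∂(gibbsP pri n ℓ (βs k.castSucc) x) := by
      have hstep : ∀ k : Fin K,
          Real.log (Zf pri L (βs k.castSucc)) - Real.log (Zf pri L (βs k.succ))
            ≤ (βs k.succ - βs k.castSucc) * ∫ h, L h ∂(Gf pri L (βs k.castSucc)) :=
        fun k => log_step hLm hL0 hLb (hβnn _) (hmono (Fin.castSucc_lt_succ (i := k))).le
      have htel : ∑ k : Fin K,
          (Real.log (Zf pri L (βs k.castSucc)) - Real.log (Zf pri L (βs k.succ)))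
          = Real.log (Zf pri L (βs 0)) - Real.log (Zf pri L (βs (Fin.last K))) := by
        have h1 := fin_telescope (fun i => Real.log (Zf pri L (βs i)))
        have h2 : ∑ k : Fin K,
            (Real.log (Zf pri L (βs k.castSucc)) - Real.log (Zf pri L (βs k.succ)))
            = -∑ k : Fin K,
              (Real.log (Zf pri L (βs k.succ)) - Real.log (Zf pri L (βs k.castSucc))) := by
          rw [← Finset.sum_neg_distrib]
          exact Finset.sum_congr rfl fun k _ => (neg_sub _ _).symm
        rw [h2, h1]; ring
      calc -Real.log (Zf pri L β)
          = Real.log (Zf pri L (βs 0)) - Real.log (Zf pri L (βs (Fin.last K))) := by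
            rw [hZ0, Real.log_one, hβ]; ring
        _ = ∑ k : Fin K,
            (Real.log (Zf pri L (βs k.castSucc)) - Real.log (Zf pri L (βs k.succ))) :=
            htel.symm
        _ ≤ ∑ k : Fin K, (βs k.succ - βs k.castSucc)
              * ∫ h, L h ∂(Gf pri L (βs k.castSucc)) :=
            Finset.sum_le_sum fun k _ => hstep k
        _ = ∑ k : Fin K, (βs k.succ - βs k.castSucc)
              * ∫ g, empLoss n ℓ g x ∂(gibbsP pri n ℓ (βs k.castSucc) x) :=
            Finset.sum_congr rfl fun k _ => by rw [hint_eq]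
    have hGam : ∀ h : H,
        Real.log (Real.exp (-β * L h) / Zf pri L β) ≤ Gam pri n ℓ βs h x := by
      intro h
      rw [Real.log_div (Real.exp_ne_zero _) hZβ.ne', Real.log_exp]
      unfold Gam
      rw [hβ]
      have hLh : L h = empLoss n ℓ h x := rfl
      rw [← hLh]
      linarith [hsum]
    have hκx : Measurable fun h : H => kappa (empLoss n f h x) (∫ y, f h y ∂μ) :=
      hκmeas.comp (f := fun h : H => ((h, x) : H × (Fin n → X)))
        (measurable_id.prodMk measurable_const)
    set S := {h : H | (1 / (n : ℝ)) * (Gam pri n ℓ βs h x + c)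
              < kappa (empLoss n f h x) (∫ y, f h y ∂μ)} with hS
    have hSmeas : MeasurableSet S := by
      apply measurableSet_lt
      · have : Measurable fun h : H => Gam pri n ℓ βs h x := by
          unfold Gam
          exact (hLm.const_mul (-βs (Fin.last K))).add_const _
        exact (this.add_const c).const_mul _
      · exact hκx
    have hGmeas : Measurable fun h : H =>
        ENNReal.ofReal (Real.exp ((n : ℝ) * kappa (empLoss n f h x) (∫ y, f h y ∂μ)) * d) :=
      (((hκx.const_mul (n : ℝ)).exp).mul_const d).ennreal_ofReal
    calc (gibbsP pri n ℓ β x) S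
        = ∫⁻ h in S, ENNReal.ofReal (Real.exp (-β * L h) / Zf pri L β) ∂pri := by
          rw [hGeq, Gf, withDensity_apply _ hSmeas]
      _ ≤ ∫⁻ h in S, ENNReal.ofReal
            (Real.exp ((n : ℝ) * kappa (empLoss n f h x) (∫ y, f h y ∂μ)) * d) ∂pri := by
          refine setLIntegral_mono hGmeas ?_
          intro h hh
          rw [hS, Set.mem_setOf_eq] at hh
          set κ := kappa (empLoss n f h x) (∫ y, f h y ∂μ) with hκ
          have h1 : Gam pri n ℓ βs h x + c < (n : ℝ) * κ := by
            have h2 := mul_lt_mul_of_pos_left hh hn0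
            rwa [← mul_assoc, mul_one_div_cancel hn0.ne', one_mul] at h2
          have hρ : 0 < Real.exp (-β * L h) / Zf pri L β :=
            div_pos (Real.exp_pos _) hZβ
          have h3 : Real.exp (-β * L h) / Zf pri L β ≤ Real.exp ((n : ℝ) * κ) * d := by
            rw [← Real.exp_log hρ]
            calc Real.exp (Real.log (Real.exp (-β * L h) / Zf pri L β))
                ≤ Real.exp ((n : ℝ) * κ - c) :=
                  Real.exp_le_exp.2 (by linarith [hGam h])
              _ = Real.exp ((n : ℝ) * κ) * d := by
                  rw [sub_eq_add_neg, Real.exp_add, hexc]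
          exact ENNReal.ofReal_le_ofReal h3
      _ ≤ ∫⁻ h, ENNReal.ofReal
            (Real.exp ((n : ℝ) * kappa (empLoss n f h x) (∫ y, f h y ∂μ)) * d) ∂pri :=
          setLIntegral_le_lintegral _ _
  -- combine
  have hswapmeas : AEMeasurable (Function.uncurry fun (x : Fin n → X) (h : H) =>
      ENNReal.ofReal (Real.exp ((n : ℝ) * kappa (empLoss n f h x) (∫ y, f h y ∂μ)) * d))
      (ν.prod pri) := by
    apply Measurable.aemeasurable
    have hswap : Measurable fun p : (Fin n → X) × H =>
        kappa (empLoss n f p.2 p.1) (∫ y, f p.2 y ∂μ) :=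
      hκmeas.comp (f := fun p : (Fin n → X) × H => (p.2, p.1))
        (measurable_snd.prodMk measurable_fst)
    exact (((hswap.const_mul (n : ℝ)).exp).mul_const d).ennreal_ofReal
  calc ∫⁻ x, (gibbsP pri n ℓ β x)
        {h | (1 / (n : ℝ)) * (Gam pri n ℓ βs h x + c)
              < kappa (empLoss n f h x) (∫ y, f h y ∂μ)} ∂ν
      ≤ ∫⁻ x, ∫⁻ h, ENNReal.ofReal
          (Real.exp ((n : ℝ) * kappa (empLoss n f h x) (∫ y, f h y ∂μ)) * d) ∂pri ∂ν :=
        lintegral_mono' le_rfl main1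
    _ = ∫⁻ h, ∫⁻ x, ENNReal.ofReal
          (Real.exp ((n : ℝ) * kappa (empLoss n f h x) (∫ y, f h y ∂μ)) * d) ∂ν ∂pri :=
        lintegral_lintegral_swap hswapmeas
    _ ≤ ∫⁻ (_ : H), ENNReal.ofReal δ ∂pri := by
        refine lintegral_mono fun h => ?_
        set q := ∫ y, f h y ∂μ with hq
        have hκh : Measurable fun x : Fin n → X => kappa (empLoss n f h x) (∫ y, f h y ∂μ) :=
          hκmeas.comp (f := fun x : Fin n → X => ((h, x) : H × (Fin n → X)))
            (measurable_const.prodMk measurable_id)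
        have hmeasx : Measurable fun x : Fin n → X =>
            Real.exp ((n : ℝ) * kappa (empLoss n f h x) q) :=
          ((hκh.const_mul (n : ℝ))).exp
        have hint : Integrable (fun x : Fin n → X =>
            Real.exp ((n : ℝ) * kappa (empLoss n f h x) q)) ν := by
          refine (integrable_const (Real.exp ((n : ℝ) *
            (|Real.log q| + |Real.log (1 - q)|)))).mono' hmeasx.aestronglyMeasurable ?_
          filter_upwards with x
          rw [Real.norm_eq_abs, abs_of_pos (Real.exp_pos _)]
          refine Real.exp_le_exp.2 (mul_le_mul_of_nonneg_left ?_ hn0.le)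
          exact add_le_add (kappa_term_le _ _ (hemp0 h x) (hemp1 h x))
            (kappa_term_le _ _ (by linarith [hemp1 h x]) (by linarith [hemp0 h x]))
        calc ∫⁻ x, ENNReal.ofReal (Real.exp ((n : ℝ) * kappa (empLoss n f h x) q) * d) ∂ν
            = ∫⁻ x, ENNReal.ofReal (Real.exp ((n : ℝ) * kappa (empLoss n f h x) q))
                * ENNReal.ofReal d ∂ν := by
              refine lintegral_congr fun x => ?_
              rw [ENNReal.ofReal_mul (Real.exp_pos _).le]
          _ = (∫⁻ x, ENNReal.ofReal
                (Real.exp ((n : ℝ) * kappa (empLoss n f h x) q)) ∂ν)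
                * ENNReal.ofReal d :=
              lintegral_mul_const _ hmeasx.ennreal_ofReal
          _ = ENNReal.ofReal (∫ x, Real.exp ((n : ℝ) * kappa (empLoss n f h x) q) ∂ν)
                * ENNReal.ofReal d := by
              rw [ofReal_integral_eq_lintegral_ofReal hint
                (Filter.Eventually.of_forall fun x => (Real.exp_pos _).le)]
          _ ≤ ENNReal.ofReal (2 * Real.sqrt n) * ENNReal.ofReal d :=
              mul_le_mul_left (ENNReal.ofReal_le_ofReal (hexp h)) _
          _ = ENNReal.ofReal δ := by
              rw [← ENNReal.ofReal_mul (by positivity)]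
              congr 1
              rw [hd]
              field_simp
    _ = ENNReal.ofReal δ := by simp
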